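/- Theorem 1, part 2 (convergence of the CEM sequence itself): Under the hypotheses of Theorem 1 part 1 (sequences z : ℕ → (Fin N → Fin K), θ : ℕ → Θ with C-step optimality Lc(z (m+1), θ m) ≥ Lc(z₀, θ m) for all z₀, M-step θ (m+1) = M (z (m+1)) where Lc(z₀, M z₀) ≥ Lc(z₀, θ₀) for all z₀, θ₀), assume in addition the tie-breaking rule: for every m, if Lc(z m, θ m) ≥ Lc(z₀, θ m) for all assignments z₀ (i.e., the current assignment already attains the C-step maximum), then z (m+1) = z m. Then there exists M₀ ≥ 1 such that z m = z M₀ and θ m = θ M₀ for all m ≥ M₀; i.e., the sequence (z m, θ m) converges to a stationary position in finitely many iterations. -/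

import Mathlib

open scoped BigOperators InnerProductSpace

/-- Gaussian density with mean `μ` and standard deviation `s`. -/
noncomputable def gauss (y μ s : ℝ) : ℝ :=
  (Real.sqrt (2 * Real.pi * s ^ 2))⁻¹ * Real.exp (-(y - μ) ^ 2 / (2 * s ^ 2))

/-- The parameter space `Θ` of the `K`-component mixture of Gaussian regressions:
mixing proportions, regression coefficients and standard deviations. -/
structure MixParams (P K : ℕ) where
  mix : Fin K → ℝ
  coef : Fin K → EuclideanSpace ℝ (Fin P)
  sd : Fin K → ℝ
  mix_pos : ∀ k, 0 < mix k
  mix_sum : ∑ k, mix k = 1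
  sd_pos : ∀ k, 0 < sd k

/-- The complete-data log-likelihood `Lc(z, θ)`. -/
noncomputable def Lc {N P K : ℕ} (x : Fin N → EuclideanSpace ℝ (Fin P)) (y : Fin N → ℝ)
    (z : Fin N → Fin K) (θ : MixParams P K) : ℝ :=
  ∑ i, (Real.log (θ.mix (z i)) +
    Real.log (gauss (y i) (⟪x i, θ.coef (z i)⟫_ℝ) (θ.sd (z i))))

/-- Theorem 1, part 2: with the tie-breaking rule, the CEM sequence `(z m, θ m)`
itself is eventually constant, i.e. converges to a stationary position. -/
theorem cem_sequence_converges {N P K : ℕ} (hN : 0 < N) (hP : 0 < P) (hK : 0 < K)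
    (x : Fin N → EuclideanSpace ℝ (Fin P)) (y : Fin N → ℝ)
    (M : (Fin N → Fin K) → MixParams P K)
    (hM : ∀ (z₀ : Fin N → Fin K) (θ₀ : MixParams P K),
      Lc x y z₀ (M z₀) ≥ Lc x y z₀ θ₀)
    (z : ℕ → (Fin N → Fin K)) (θ : ℕ → MixParams P K)
    (hC : ∀ (m : ℕ) (z₀ : Fin N → Fin K),
      Lc x y (z (m + 1)) (θ m) ≥ Lc x y z₀ (θ m))
    (hMstep : ∀ m : ℕ, θ (m + 1) = M (z (m + 1)))
    (hTie : ∀ m : ℕ,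
      (∀ z₀ : Fin N → Fin K, Lc x y (z m) (θ m) ≥ Lc x y z₀ (θ m)) → z (m + 1) = z m) :
    ∃ M₀ : ℕ, 1 ≤ M₀ ∧ ∀ m ≥ M₀, z m = z M₀ ∧ θ m = θ M₀ := by
  classical
  set g : ℕ → ℝ := fun m => Lc x y (z m) (θ m) with hg
  -- g is monotone
  have hstep : ∀ m, g m ≤ g (m + 1) := by
    intro m
    have h1 : Lc x y (z m) (θ m) ≤ Lc x y (z (m + 1)) (θ m) := hC m (z m)
    have h2 : Lc x y (z (m + 1)) (θ m) ≤ Lc x y (z (m + 1)) (θ (m + 1)) := by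
      rw [hMstep m]; exact hM (z (m + 1)) (θ m)
    exact h1.trans h2
  have hmono : Monotone g := monotone_nat_of_le_succ hstep
  -- key: if g (m+1) = g m then z (m+1) = z m
  have hkey : ∀ m, g (m + 1) = g m → z (m + 1) = z m := by
    intro m heq
    apply hTie m
    intro z₀
    have h2 : Lc x y (z (m + 1)) (θ m) ≤ g (m + 1) := by
      rw [hg]; simp only
      rw [hMstep m]; exact hM (z (m + 1)) (θ m)
    have h3 : Lc x y (z (m + 1)) (θ m) ≤ g m := heq ▸ h2
    exact le_trans (hC m z₀) (le_trans (hC m (z (m + 1))) h3)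
  -- the shifted sequence has finite range
  set h : ℕ → ℝ := fun m => g (m + 1) with hh
  have hsub : Set.range h ⊆ Set.range (fun z₀ : Fin N → Fin K => Lc x y z₀ (M z₀)) := by
    rintro _ ⟨m, rfl⟩
    exact ⟨z (m + 1), by rw [hh]; simp only [hg]; rw [hMstep m]⟩
  have hfin : (Set.range h).Finite := (Set.finite_range _).subset hsub
  obtain ⟨a, ha, hamax⟩ := Set.Finite.exists_maximalFor id _ hfin ⟨h 0, Set.mem_range_self 0⟩
  obtain ⟨m₀, rfl⟩ := ha
  have hmax : ∀ m, h m ≤ h m₀ := by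
    intro m
    rcases le_total (h m) (h m₀) with h' | h'
    · exact h'
    · exact hamax (Set.mem_range_self m) h'
  -- for m ≥ m₀ + 1, g m = g (m₀ + 1)
  have hconst : ∀ m ≥ m₀ + 1, g m = g (m₀ + 1) := by
    intro m hm
    obtain ⟨k, rfl⟩ := Nat.exists_eq_add_of_le hm
    refine le_antisymm ?_ (hmono (Nat.le_add_right _ _))
    have := hmax (m₀ + k)
    simp only [hh] at this
    calc g (m₀ + 1 + k) = g (m₀ + k + 1) := by ring_nf
      _ ≤ g (m₀ + 1) := this
  refine ⟨m₀ + 1, Nat.le_add_left 1 m₀, ?_⟩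
  intro m hm
  obtain ⟨k, rfl⟩ := Nat.exists_eq_add_of_le hm
  induction k with
  | zero => exact ⟨rfl, rfl⟩
  | succ k ih =>
    obtain ⟨hz, hθ⟩ := ih (Nat.le_add_right _ _)
    have hzeq : z (m₀ + 1 + k + 1) = z (m₀ + 1 + k) := by
      apply hkey
      rw [hconst (m₀ + 1 + k + 1) (by omega), hconst (m₀ + 1 + k) (by omega)]
    constructor
    · rw [show m₀ + 1 + (k + 1) = m₀ + 1 + k + 1 from rfl, hzeq]; exact hz
    · rw [show m₀ + 1 + (k + 1) = (m₀ + k + 1) + 1 from by ring, hMstep,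
        show m₀ + k + 1 + 1 = m₀ + 1 + k + 1 from by ring, hzeq,
        show m₀ + 1 + k = m₀ + k + 1 from by ring]
      rw [show m₀ + k + 1 = m₀ + 1 + k from by ring, hz]
      rw [show z (m₀ + 1) = z (m₀ + 1) from rfl]
      have : θ (m₀ + 1) = M (z (m₀ + 1)) := hMstep m₀
      rw [this]
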